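/- Let n, m ≥ 1 and let M₁, M₂ : Fin n → Fin m → ℝ be the leader's and follower's payoff matrices of a finite two-player game. Then there exist a probability vector x* on Fin n and a column index j* : Fin m such that j* is a best response to x* (i.e., for all j : Fin m, ∑ i, x* i * M₂ i j* ≥ ∑ i, x* i * M₂ i j), and for every probability vector x on Fin n and every j : Fin m that is a best response to x (i.e., for all j', ∑ i, x i * M₂ i j ≥ ∑ i, x i * M₂ i j'), one has ∑ i, x i * M₁ i j ≤ ∑ i, x* i * M₁ i j*. In other words, a (strong) Stackelberg equilibrium of the single-shot game exists. -/

import Mathlib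

/-- Existence of a (strong) Stackelberg equilibrium in a single-shot
two-player game: there is a leader mixed strategy `x*` and a follower
best-response column `j*` such that no leader strategy together with a
best-responding column can give the leader a larger payoff. -/
theorem stackelberg_equilibrium_exists (n m : ℕ) (hn : 1 ≤ n) (hm : 1 ≤ m)
    (M₁ M₂ : Fin n → Fin m → ℝ) :
    ∃ (xs : Fin n → ℝ) (js : Fin m),
      (∀ i, 0 ≤ xs i) ∧ (∑ i, xs i = 1) ∧
      (∀ j, ∑ i, xs i * M₂ i js ≥ ∑ i, xs i * M₂ i j) ∧
      (∀ x : Fin n → ℝ, (∀ i, 0 ≤ x i) → (∑ i, x i = 1) →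
        ∀ j : Fin m, (∀ j', ∑ i, x i * M₂ i j ≥ ∑ i, x i * M₂ i j') →
          ∑ i, x i * M₁ i j ≤ ∑ i, xs i * M₁ i js) := by
  classical
  haveI : Nonempty (Fin n) := ⟨⟨0, hn⟩⟩
  haveI : Nonempty (Fin m) := ⟨⟨0, hm⟩⟩
  set S : Set (Fin n → ℝ) := stdSimplex ℝ (Fin n) with hS
  have hScc : IsCompact S := isCompact_stdSimplex _ _
  -- payoff functions
  set f : Fin m → (Fin n → ℝ) → ℝ := fun j x => ∑ i, x i * M₂ i j with hf
  set g : Fin m → (Fin n → ℝ) → ℝ := fun j x => ∑ i, x i * M₁ i j with hg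
  have hfc : ∀ j, Continuous (f j) := fun j =>
    continuous_finset_sum _ fun i _ => (continuous_apply i).mul continuous_const
  have hgc : ∀ j, Continuous (g j) := fun j =>
    continuous_finset_sum _ fun i _ => (continuous_apply i).mul continuous_const
  -- best-response regions
  set C : Fin m → Set (Fin n → ℝ) := fun j => S ∩ {x | ∀ j', f j' x ≤ f j x} with hC
  have hCcc : ∀ j, IsCompact (C j) := by
    intro j
    refine hScc.inter_right ?_
    have : {x | ∀ j', f j' x ≤ f j x} = ⋂ j', {x | f j' x ≤ f j x} := by
      ext x; simp
    rw [this]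
    exact isClosed_iInter fun j' => isClosed_le (hfc j') (hfc j)
  -- maximizer on each nonempty region
  have hmax : ∀ j : Fin m, (C j).Nonempty →
      ∃ x ∈ C j, ∀ y ∈ C j, g j y ≤ g j x := by
    intro j h
    obtain ⟨x, hx, hmax⟩ := (hCcc j).exists_isMaxOn h (hgc j).continuousOn
    exact ⟨x, hx, fun y hy => hmax hy⟩
  choose! xch hxmem hxmax using hmax
  -- every simplex point has some best response
  have hcover : ∀ x ∈ S, ∃ j, x ∈ C j := by
    intro x hx
    obtain ⟨j, _, hj⟩ := Finset.exists_max_image Finset.univ (fun j => f j x)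
      Finset.univ_nonempty
    exact ⟨j, hx, fun j' => hj j' (Finset.mem_univ _)⟩
  -- the set of columns with nonempty region
  set T : Finset (Fin m) := Finset.univ.filter (fun j => (C j).Nonempty) with hT
  have hTne : T.Nonempty := by
    obtain ⟨j, hj⟩ := hcover _ (single_mem_stdSimplex ℝ (⟨0, hn⟩ : Fin n))
    exact ⟨j, by simp only [hT, Finset.mem_filter, Finset.mem_univ, true_and]; exact ⟨_, hj⟩⟩
  obtain ⟨js, hjsT, hjsmax⟩ := Finset.exists_max_image T (fun j => g j (xch j)) hTne
  have hjsne : (C js).Nonempty := by simpa [hT] using hjsT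
  refine ⟨xch js, js, ?_, ?_, ?_, ?_⟩
  · exact (hxmem js hjsne).1.1
  · exact (hxmem js hjsne).1.2
  · exact fun j => (hxmem js hjsne).2 j
  · intro x hx0 hx1 j hbr
    have hxC : x ∈ C j := ⟨⟨hx0, hx1⟩, fun j' => hbr j'⟩
    have hjT : j ∈ T := by simp [hT]; exact ⟨x, hxC⟩
    calc g j x ≤ g j (xch j) := hxmax j ⟨x, hxC⟩ x hxC
    _ ≤ g js (xch js) := hjsmax j hjT
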